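/- Let A be a canonical quasi-Babelian 3×3 advantage matrix with parameters a, b > 0 (a₂₁ = a₃₁ = b and all other off-diagonal entries equal to a) and let F : S₃ → S₃ be the associated Variational Learning dynamics. Then for all values of a, b > 0, the vertex fixed points v₂ = (0,1,0) and v₃ = (0,0,1) are not asymptotically stable: for each of these vertices and every relative neighbourhood U of it in S₃, there exists q ∈ U whose iterates under F do not converge to that vertex. -/

import Mathlib

open Finset Filter Topology

/-- The simplex `S₃` of probability vectors over three grammars. -/
def simplex3 : Set (Fin 3 → ℝ) :=
  {p | (∀ i, 0 ≤ p i) ∧ ∑ i, p i = 1}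

/-- The penalty probability `c_i(p) = ∑_{j ≠ i} a_{ij} p_j`. -/
def penalty (A : Matrix (Fin 3) (Fin 3) ℝ) (p : Fin 3 → ℝ) (i : Fin 3) : ℝ :=
  ∑ j ∈ Finset.univ.filter (fun j => j ≠ i), A i j * p j

/-- The Variational Learning dynamics
`F_i(p) = ∏_{j ≠ i} c_j(p) / ∑_m ∏_{k ≠ m} c_k(p)`. -/
noncomputable def VLdyn (A : Matrix (Fin 3) (Fin 3) ℝ) (p : Fin 3 → ℝ) (i : Fin 3) : ℝ :=
  (∏ j ∈ Finset.univ.filter (fun j => j ≠ i), penalty A p j) /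
    (∑ m, ∏ k ∈ Finset.univ.filter (fun k => k ≠ m), penalty A p k)

/-- The vertex `v_i` of the simplex, i.e. the state of total dominance of grammar `G_i`. -/
def vertex (i : Fin 3) : Fin 3 → ℝ := fun j => if j = i then 1 else 0

/-! ### Auxiliary development -/

/-- An abstract instability criterion: if there is a continuous "Lyapunov" function `V`
vanishing at `v`, positive at `q`, multiplied at each step by a factor `R` which is
positive on the invariant set `S` and at least `1` near `v`, then the orbit of `q`
cannot converge to `v`. -/
lemma lyap_instab {S : Set (Fin 3 → ℝ)} {f : (Fin 3 → ℝ) → (Fin 3 → ℝ)}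
    {v : Fin 3 → ℝ} (hfS : ∀ p ∈ S, f p ∈ S)
    (V R : (Fin 3 → ℝ) → ℝ) (hVcont : Continuous V) (hV0 : V v = 0)
    (hR : ∀ p ∈ S, V (f p) = V p * R p)
    (hRpos : ∀ p ∈ S, 0 < R p)
    (hRge : ∀ᶠ p in 𝓝 v, 1 ≤ R p)
    {q : Fin 3 → ℝ} (hqS : q ∈ S) (hVq : 0 < V q) :
    ¬ Tendsto (fun n => f^[n] q) atTop (𝓝 v) := by
  intro hT
  have horb : ∀ n, f^[n] q ∈ S := by
    intro n
    induction n with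
    | zero => simpa
    | succ n ih => rw [Function.iterate_succ_apply']; exact hfS _ ih
  have hVp : ∀ n, 0 < V (f^[n] q) := by
    intro n
    induction n with
    | zero => simpa
    | succ n ih =>
      rw [Function.iterate_succ_apply', hR _ (horb n)]
      exact mul_pos ih (hRpos _ (horb n))
  obtain ⟨N, hN⟩ := eventually_atTop.mp (hT.eventually hRge)
  have hmono : ∀ k, V (f^[N] q) ≤ V (f^[N + k] q) := by
    intro k
    induction k with
    | zero => simp
    | succ k ih =>
      have h1 : f^[N + (k+1)] q = f (f^[N + k] q) := by
        rw [Nat.add_succ, Function.iterate_succ_apply']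
      calc V (f^[N] q) ≤ V (f^[N + k] q) := ih
        _ ≤ V (f^[N + k] q) * R (f^[N + k] q) :=
            le_mul_of_one_le_right (hVp _).le (hN _ (Nat.le_add_right N k))
        _ = V (f^[N + (k+1)] q) := by rw [h1, hR _ (horb _)]
  have hVt : Tendsto (fun n => V (f^[n] q)) atTop (𝓝 0) := by
    have h := (hVcont.tendsto v).comp hT
    simpa [hV0, Function.comp_def] using h
  obtain ⟨m, hm1, hm2⟩ :=
    ((hVt.eventually (gt_mem_nhds (hVp N))).and (eventually_ge_atTop N)).exists
  have h3 := hmono (m - N)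
  rw [Nat.add_sub_cancel' hm2] at h3
  linarith

/-- The common denominator of the dynamics. -/
def qbD (a b : ℝ) (p : Fin 3 → ℝ) : ℝ :=
  (b * p 0 + a * p 2) * (b * p 0 + a * p 1) +
    (a * p 1 + a * p 2) * (b * p 0 + a * p 1) +
    (a * p 1 + a * p 2) * (b * p 0 + a * p 2)

lemma qb_pen0 (a b : ℝ) (p : Fin 3 → ℝ) :
    penalty !![0, a, a; b, 0, a; b, a, 0] p 0 = a * p 1 + a * p 2 := by
  simp [penalty, Finset.sum_filter, Fin.sum_univ_three]

lemma qb_pen1 (a b : ℝ) (p : Fin 3 → ℝ) :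
    penalty !![0, a, a; b, 0, a; b, a, 0] p 1 = b * p 0 + a * p 2 := by
  simp [penalty, Finset.sum_filter, Fin.sum_univ_three]

lemma qb_pen2 (a b : ℝ) (p : Fin 3 → ℝ) :
    penalty !![0, a, a; b, 0, a; b, a, 0] p 2 = b * p 0 + a * p 1 := by
  simp [penalty, Finset.sum_filter, Fin.sum_univ_three]

lemma qb_f0 (a b : ℝ) (p : Fin 3 → ℝ) :
    VLdyn !![0, a, a; b, 0, a; b, a, 0] p 0 =
      (b * p 0 + a * p 2) * (b * p 0 + a * p 1) / qbD a b p := by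
  simp [VLdyn, Finset.prod_filter, Fin.prod_univ_three, Fin.sum_univ_three,
    qb_pen0, qb_pen1, qb_pen2, qbD]

lemma qb_f1 (a b : ℝ) (p : Fin 3 → ℝ) :
    VLdyn !![0, a, a; b, 0, a; b, a, 0] p 1 =
      (a * p 1 + a * p 2) * (b * p 0 + a * p 1) / qbD a b p := by
  simp [VLdyn, Finset.prod_filter, Fin.prod_univ_three, Fin.sum_univ_three,
    qb_pen0, qb_pen1, qb_pen2, qbD]

lemma qb_f2 (a b : ℝ) (p : Fin 3 → ℝ) :
    VLdyn !![0, a, a; b, 0, a; b, a, 0] p 2 =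
      (a * p 1 + a * p 2) * (b * p 0 + a * p 2) / qbD a b p := by
  simp [VLdyn, Finset.prod_filter, Fin.prod_univ_three, Fin.sum_univ_three,
    qb_pen0, qb_pen1, qb_pen2, qbD]

lemma qb_sum3 (p : Fin 3 → ℝ) (hp : p ∈ simplex3) : p 0 + p 1 + p 2 = 1 := by
  have := hp.2
  rwa [Fin.sum_univ_three] at this

lemma qb_D_pos {a b : ℝ} (ha : 0 < a) (hb : 0 < b) {p : Fin 3 → ℝ}
    (hp : p ∈ simplex3) : 0 < qbD a b p := by
  have hx := hp.1 0
  have hy := hp.1 1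
  have hz := hp.1 2
  have hs := qb_sum3 p hp
  unfold qbD
  rcases eq_or_lt_of_le hx with h | h
  · rw [← h]
    have h2 : (p 1 + p 2) ^ 2 = 1 := by nlinarith
    nlinarith [mul_pos ha ha, h2, mul_nonneg (mul_nonneg ha.le ha.le) (mul_nonneg hy hz)]
  · nlinarith [mul_pos (mul_pos hb hb) (mul_pos h h),
      mul_nonneg (mul_nonneg ha.le hb.le) (mul_nonneg h.le hy),
      mul_nonneg (mul_nonneg ha.le hb.le) (mul_nonneg h.le hz),
      mul_nonneg (mul_nonneg ha.le ha.le) (mul_nonneg hy hz),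
      mul_nonneg (mul_nonneg ha.le ha.le) (mul_nonneg hy hy),
      mul_nonneg (mul_nonneg ha.le ha.le) (mul_nonneg hz hz)]

lemma qb_num_pos {a b : ℝ} (ha : 0 < a) (hb : 0 < b) {p : Fin 3 → ℝ}
    (hp : p ∈ simplex3) (w : Fin 3) (hw : w = 1 ∨ w = 2) :
    0 < b * (b * p 0 + a * p w) + a * (a * p 1 + a * p 2) := by
  have hx := hp.1 0
  have hy := hp.1 1
  have hz := hp.1 2
  have hs := qb_sum3 p hp
  rcases hw with rfl | rfl
  · rcases eq_or_lt_of_le hx with h | h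
    · rw [← h]
      nlinarith [mul_pos ha ha, mul_nonneg (mul_nonneg ha.le hb.le) hy]
    · nlinarith [mul_pos (mul_pos hb hb) h, mul_nonneg (mul_nonneg ha.le hb.le) hy,
        mul_nonneg (mul_nonneg ha.le ha.le) hy, mul_nonneg (mul_nonneg ha.le ha.le) hz]
  · rcases eq_or_lt_of_le hx with h | h
    · rw [← h]
      nlinarith [mul_pos ha ha, mul_nonneg (mul_nonneg ha.le hb.le) hz]
    · nlinarith [mul_pos (mul_pos hb hb) h, mul_nonneg (mul_nonneg ha.le hb.le) hz,
        mul_nonneg (mul_nonneg ha.le ha.le) hy, mul_nonneg (mul_nonneg ha.le ha.le) hz]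

lemma qb_mapsTo {a b : ℝ} (ha : 0 < a) (hb : 0 < b) {p : Fin 3 → ℝ}
    (hp : p ∈ simplex3) : VLdyn !![0, a, a; b, 0, a; b, a, 0] p ∈ simplex3 := by
  have hx := hp.1 0
  have hy := hp.1 1
  have hz := hp.1 2
  have hD := qb_D_pos ha hb hp
  constructor
  · have h1 : 0 ≤ b * p 0 + a * p 2 := by positivity
    have h2 : 0 ≤ b * p 0 + a * p 1 := by positivity
    have h3 : 0 ≤ a * p 1 + a * p 2 := by positivity
    have g0 : 0 ≤ VLdyn !![0, a, a; b, 0, a; b, a, 0] p 0 := by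
      rw [qb_f0]; exact div_nonneg (mul_nonneg h1 h2) hD.le
    have g1 : 0 ≤ VLdyn !![0, a, a; b, 0, a; b, a, 0] p 1 := by
      rw [qb_f1]; exact div_nonneg (mul_nonneg h3 h2) hD.le
    have g2 : 0 ≤ VLdyn !![0, a, a; b, 0, a; b, a, 0] p 2 := by
      rw [qb_f2]; exact div_nonneg (mul_nonneg h3 h1) hD.le
    intro j
    fin_cases j
    exacts [g0, g1, g2]
  · rw [Fin.sum_univ_three, qb_f0, qb_f1, qb_f2, ← add_div, ← add_div]
    rw [show (b * p 0 + a * p 2) * (b * p 0 + a * p 1) +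
        (a * p 1 + a * p 2) * (b * p 0 + a * p 1) +
        (a * p 1 + a * p 2) * (b * p 0 + a * p 2) = qbD a b p from rfl]
    exact div_self hD.ne'

lemma qb_vertex_mem (i : Fin 3) : vertex i ∈ simplex3 := by
  constructor
  · intro j
    unfold vertex
    split <;> norm_num
  · simp [vertex, Finset.sum_ite_eq]

/-- A curve inside the simplex approaching `vertex i` as `t → 0`. -/
def qbCurve (i : Fin 3) (t : ℝ) : Fin 3 → ℝ :=
  fun j => if j = 0 then t else if j = i then 1 - t else 0

lemma qbCurve_cont (i : Fin 3) : Continuous (qbCurve i) := by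
  apply continuous_pi
  intro j
  by_cases h0 : j = 0
  · simp only [qbCurve, h0, if_true]
    fun_prop
  · by_cases h1 : j = i
    · subst h1
      simp only [qbCurve, h0, if_false, if_true]
      fun_prop
    · simp only [qbCurve, h0, h1, if_false]
      fun_prop
  
lemma qbCurve_zero {i : Fin 3} (hi : i = 1 ∨ i = 2) : qbCurve i 0 = vertex i := by
  rcases hi with rfl | rfl <;> funext j <;> fin_cases j <;>
    norm_num [qbCurve, vertex, Fin.ext_iff]

lemma qbCurve_mem {i : Fin 3} (hi : i = 1 ∨ i = 2) {t : ℝ} (h0 : 0 ≤ t) (h1 : t ≤ 1) :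
    qbCurve i t ∈ simplex3 := by
  constructor
  · intro j
    rcases hi with rfl | rfl <;> fin_cases j <;>
      norm_num [qbCurve, Fin.ext_iff] <;> linarith
  · rw [Fin.sum_univ_three]
    rcases hi with rfl | rfl <;> norm_num [qbCurve, Fin.ext_iff]

theorem stmt_17 (a b : ℝ) (ha : 0 < a) (hb : 0 < b)
    (A : Matrix (Fin 3) (Fin 3) ℝ)
    (hA : A = !![0, a, a; b, 0, a; b, a, 0]) :
    ∀ i : Fin 3, i = 1 ∨ i = 2 → ∀ U ∈ 𝓝[simplex3] (vertex i), ∃ q ∈ U,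
      ¬ Tendsto (fun n => (VLdyn A)^[n] q) atTop (𝓝 (vertex i)) := by
  subst hA
  intro i hi U hU
  obtain ⟨w, u, hiw⟩ : ∃ w u : Fin 3,
      (i = 1 ∧ w = 2 ∧ u = 1) ∨ (i = 2 ∧ w = 1 ∧ u = 2) := by
    rcases hi with rfl | rfl
    · exact ⟨2, 1, Or.inl ⟨rfl, rfl, rfl⟩⟩
    · exact ⟨1, 2, Or.inr ⟨rfl, rfl, rfl⟩⟩
  rw [mem_nhdsWithin] at hU
  obtain ⟨T, hTo, hTv, hTU⟩ := hU
  have hT0 : (qbCurve i) ⁻¹' T ∈ 𝓝 (0 : ℝ) := by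
    apply (qbCurve_cont i).continuousAt.preimage_mem_nhds
    rw [qbCurve_zero hi]
    exact hTo.mem_nhds hTv
  obtain ⟨ε, hε, hball⟩ := Metric.mem_nhds_iff.mp hT0
  have ht0 : 0 < min (ε / 2) 1 := lt_min (by linarith) one_pos
  have ht1 : min (ε / 2) 1 ≤ 1 := min_le_right _ _
  have htε : min (ε / 2) 1 < ε := lt_of_le_of_lt (min_le_left _ _) (by linarith)
  have hqT : qbCurve i (min (ε / 2) 1) ∈ T := by
    apply hball
    simp only [Metric.mem_ball, Real.dist_eq, sub_zero, abs_of_pos ht0]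
    exact htε
  have hqS : qbCurve i (min (ε / 2) 1) ∈ simplex3 := qbCurve_mem hi ht0.le ht1
  refine ⟨qbCurve i (min (ε / 2) 1), hTU ⟨hqT, hqS⟩, ?_⟩
  have hDvne : qbD a b (vertex i) ≠ 0 := (qb_D_pos ha hb (qb_vertex_mem i)).ne'
  have hRv : 1 < (b * (b * vertex i 0 + a * vertex i u) +
      a * (a * vertex i 1 + a * vertex i 2)) / qbD a b (vertex i) := by
    rcases hiw with ⟨rfl, rfl, rfl⟩ | ⟨rfl, rfl, rfl⟩ <;>
    · norm_num [vertex, Fin.ext_iff, qbD]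
      rw [lt_div_iff₀ (by nlinarith)]
      nlinarith
  refine lyap_instab (fun p hp => qb_mapsTo ha hb hp)
    (fun p => b * p 0 + a * p w)
    (fun p => (b * (b * p 0 + a * p u) + a * (a * p 1 + a * p 2)) / qbD a b p)
    (by fun_prop) ?_ ?_ ?_ ?_ hqS ?_
  · -- V (vertex i) = 0
    rcases hiw with ⟨rfl, rfl, rfl⟩ | ⟨rfl, rfl, rfl⟩ <;>
      norm_num [vertex, Fin.ext_iff]
  · -- multiplicative identity
    intro p hp
    have hD := (qb_D_pos ha hb hp).ne'
    rcases hiw with ⟨rfl, rfl, rfl⟩ | ⟨rfl, rfl, rfl⟩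
    · show b * VLdyn !![0, a, a; b, 0, a; b, a, 0] p 0 +
          a * VLdyn !![0, a, a; b, 0, a; b, a, 0] p 2 =
        (b * p 0 + a * p 2) *
          ((b * (b * p 0 + a * p 1) + a * (a * p 1 + a * p 2)) / qbD a b p)
      rw [qb_f0, qb_f2]
      field_simp
    · show b * VLdyn !![0, a, a; b, 0, a; b, a, 0] p 0 +
          a * VLdyn !![0, a, a; b, 0, a; b, a, 0] p 1 =
        (b * p 0 + a * p 1) *
          ((b * (b * p 0 + a * p 2) + a * (a * p 1 + a * p 2)) / qbD a b p)
      rw [qb_f0, qb_f1]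
      field_simp
  · -- positivity of the ratio
    intro p hp
    have hu : u = 1 ∨ u = 2 := by
      rcases hiw with ⟨-, -, rfl⟩ | ⟨-, -, rfl⟩
      · exact Or.inl rfl
      · exact Or.inr rfl
    exact div_pos (qb_num_pos ha hb hp u hu) (qb_D_pos ha hb hp)
  · -- eventually `1 ≤ R`
    have hRcont : ContinuousAt
        (fun p => (b * (b * p 0 + a * p u) + a * (a * p 1 + a * p 2)) / qbD a b p)
        (vertex i) := by
      apply ContinuousAt.div
      · fun_prop
      · apply Continuous.continuousAt
        unfold qbD
        fun_prop
      · exact hDvne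
    have hopen : {x : ℝ | 1 < x} ∈
        𝓝 ((b * (b * vertex i 0 + a * vertex i u) +
          a * (a * vertex i 1 + a * vertex i 2)) / qbD a b (vertex i)) :=
      (isOpen_lt continuous_const continuous_id).mem_nhds hRv
    filter_upwards [hRcont.preimage_mem_nhds hopen] with p hp using le_of_lt hp
  · -- positivity of V at q
    rcases hiw with ⟨rfl, rfl, rfl⟩ | ⟨rfl, rfl, rfl⟩ <;>
    · show 0 < b * qbCurve _ (min (ε / 2) 1) 0 + a * qbCurve _ (min (ε / 2) 1) _
      norm_num [qbCurve, Fin.ext_iff]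
      nlinarith [mul_pos hb ht0]
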